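/- Let n and k be integers with n ≥ 2 and 3 ≤ k < ⌈log₂ n⌉. Then: (1) every connected simple graph G of order n with |E(G)| ≤ n−1 satisfies cfc(G) ≥ k; and (2) there exists a connected simple graph of order n with exactly n edges whose conflict-free connection number is less than k (namely the cycle C_n, with cfc(C_n) = 2). Consequently, n−1 is the largest integer m such that every connected graph of order n with at most m edges has conflict-free connection number at least k. -/

import Mathlib

open SimpleGraph

/-- An edge-coloring `c` with `k` colors makes `G` conflict-free connected if every two
distinct vertices are joined by a path on which some color appears on exactly one edge. -/
def SimpleGraph.IsCFCColoring {V : Type*} (G : SimpleGraph V) {k : ℕ}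
    (c : Sym2 V → Fin k) : Prop :=
  ∀ u v : V, u ≠ v → ∃ p : G.Walk u v, p.IsPath ∧
    ∃ col : Fin k, (p.edges.map c).count col = 1

/-- The conflict-free connection number of `G`: the smallest number of colors in an
edge-coloring of `G` that makes `G` conflict-free connected. -/
noncomputable def SimpleGraph.cfc {V : Type*} (G : SimpleGraph V) : ℕ :=
  sInf {k | ∃ c : Sym2 V → Fin k, G.IsCFCColoring c}

/-! ### Auxiliary lemmas: general graphs -/

lemma aux_card_le_edges {V : Type*} [Fintype V] (G : SimpleGraph V) (hG : G.Connected) :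
    Fintype.card V ≤ G.edgeSet.ncard + 1 := by
  classical
  have hne : Nonempty V := hG.nonempty
  obtain ⟨r⟩ := hne
  have key : ∀ v : V, ∃ u : V, v ≠ r →
      G.Adj u v ∧ G.dist r u + 1 = G.dist r v := by
    intro v
    by_cases hv : v = r
    · exact ⟨r, fun h => absurd hv h⟩
    obtain ⟨p, hp⟩ := hG.exists_walk_length_eq_dist r v
    have hd : 0 < G.dist r v := hG.pos_dist_of_ne (Ne.symm hv)
    have hlen : p.reverse.length = G.dist r v := by
      rw [SimpleGraph.Walk.length_reverse, hp]
    cases hq : p.reverse with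
    | nil =>
      have h0 : p.reverse.length = 0 := by rw [hq]; rfl
      omega
    | @cons _ u _ h q' =>
      refine ⟨u, fun _ => ⟨h.symm, ?_⟩⟩
      have h1 : G.dist r u ≤ q'.length := by
        simpa using SimpleGraph.dist_le q'.reverse
      have h2 : G.dist r v ≤ G.dist r u + 1 := by
        calc G.dist r v ≤ G.dist r u + G.dist u v := hG.dist_triangle
        _ ≤ G.dist r u + 1 := by
            have := SimpleGraph.dist_le (SimpleGraph.Walk.cons h.symm SimpleGraph.Walk.nil)
            simpa using this
      have h3 : q'.length + 1 = G.dist r v := by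
        rw [hq] at hlen; simpa using hlen
      omega
  choose f hf using key
  have hinj : Set.InjOn (fun v => s(f v, v)) ({r}ᶜ : Set V) := by
    intro a ha b hb hab
    simp only [Set.mem_compl_iff, Set.mem_singleton_iff] at ha hb
    simp only [Sym2.eq_iff] at hab
    rcases hab with ⟨h1, h2⟩ | ⟨h1, h2⟩
    · exact h2
    · exfalso
      obtain ⟨_, hda⟩ := hf a ha
      obtain ⟨_, hdb⟩ := hf b hb
      rw [h1] at hda
      rw [← h2] at hdb
      omega
  have hmaps : ∀ a ∈ ({r}ᶜ : Set V), s(f a, a) ∈ G.edgeSet := by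
    intro a ha
    simp only [Set.mem_compl_iff, Set.mem_singleton_iff] at ha
    exact (hf a ha).1
  have hcard := Set.ncard_le_ncard_of_injOn _ hmaps hinj (Set.toFinite _)
  have hcompl : ({r} : Set V).ncard + ({r}ᶜ : Set V).ncard = Nat.card V :=
    Set.ncard_add_ncard_compl _
  rw [Set.ncard_singleton, Nat.card_eq_fintype_card] at hcompl
  omega

lemma aux_acyclic {V : Type*} [Fintype V] (G : SimpleGraph V) (hG : G.Connected)
    (hE : G.edgeSet.ncard ≤ Fintype.card V - 1) : G.IsAcyclic := by
  classical
  intro v w hw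
  have h3 := hw.three_le_length
  have hconsume : w.edges ≠ [] := by
    intro h
    have := SimpleGraph.Walk.length_edges w
    rw [h] at this
    simp at this
    omega
  obtain ⟨e, he⟩ := List.exists_mem_of_ne_nil _ hconsume
  revert he
  induction e using Sym2.ind with
  | _ a b =>
  intro he
  have hex : ∃ (u : V) (p : G.Walk u u), p.IsCycle ∧ s(a, b) ∈ p.edges := ⟨v, w, hw, he⟩
  obtain ⟨hadj, hreach⟩ := (adj_and_reachable_delete_edges_iff_exists_cycle).mpr hex
  set G' : SimpleGraph V := G \ fromEdgeSet {s(a, b)} with hG'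
  have hstep : ∀ x y : V, G.Adj x y → G'.Reachable x y := by
    intro x y hxy
    by_cases hcase : s(x, y) = s(a, b)
    · rw [Sym2.eq_iff] at hcase
      rcases hcase with ⟨rfl, rfl⟩ | ⟨rfl, rfl⟩
      · exact hreach
      · exact hreach.symm
    · refine SimpleGraph.Adj.reachable ?_
      rw [hG', sdiff_adj, fromEdgeSet_adj]
      exact ⟨hxy, fun h => hcase h.1⟩
  have hconn' : G'.Connected := by
    have hpre : G'.Preconnected := by
      intro x y
      obtain ⟨p⟩ := hG.preconnected x y
      induction p with
      | nil => exact SimpleGraph.Reachable.refl _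
      | cons h q ih => exact (hstep _ _ h).trans ih
    have : Nonempty V := hG.nonempty
    exact SimpleGraph.Connected.mk hpre
  have hedge' : G'.edgeSet = G.edgeSet \ {s(a, b)} := by
    simp [hG', edgeSet_sdiff, edgeSet_fromEdgeSet, edgeSet_sdiff_sdiff_isDiag]
  have hmem : s(a, b) ∈ G.edgeSet := hadj
  have hncard : G'.edgeSet.ncard = G.edgeSet.ncard - 1 := by
    rw [hedge', Set.ncard_diff_singleton_of_mem hmem]
  have h1 := aux_card_le_edges G' hconn'
  have hpos : 0 < G.edgeSet.ncard := by
    rw [Set.ncard_pos (Set.toFinite _)]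
    exact ⟨_, hmem⟩
  have hcpos : 0 < Fintype.card V := Fintype.card_pos_iff.mpr hG.nonempty
  omega

/-- The key counting bound: a connected acyclic graph admitting a conflict-free coloring
with `t` colors has at most `2 ^ t` vertices (via the parity-of-colors injection). -/
lemma aux_card_le_pow {V : Type*} [Fintype V] (G : SimpleGraph V) (hG : G.Connected)
    (hA : G.IsAcyclic) {t : ℕ} (c : Sym2 V → Fin t) (hc : G.IsCFCColoring c) :
    Fintype.card V ≤ 2 ^ t := by
  classical
  have hne : Nonempty V := hG.nonempty
  obtain ⟨r⟩ := hne
  have hu : ∀ ⦃v w : V⦄ (p q : G.Path v w), p = q := fun v w => hA.path_unique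
  let pa : ∀ v : V, G.Path r v := fun v => (hG.preconnected r v).some.toPath
  let φ : V → Fin t → ZMod 2 := fun v a =>
    ((((pa v : G.Walk r v).edges.map c).count a : ℕ) : ZMod 2)
  have two_zero : ∀ z : ZMod 2, z + z = 0 := by decide
  have hadj : ∀ (x y : V) (h : G.Adj x y) (a : Fin t),
      φ y a = φ x a + (([c s(x, y)].count a : ℕ) : ZMod 2) := by
    intro x y h a
    by_cases hx : x ∈ (pa y : G.Walk r y).support
    · have hpy : (pa y : G.Walk r y).IsPath := (pa y).2
      have hspec := SimpleGraph.Walk.take_spec (pa y : G.Walk r y) hx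
      have h1 : ((pa y : G.Walk r y).takeUntil x hx).IsPath := hpy.takeUntil hx
      have h2 : ((pa y : G.Walk r y).dropUntil x hx).IsPath := hpy.dropUntil hx
      have e1 : (pa x : G.Walk r x) = (pa y : G.Walk r y).takeUntil x hx := by
        have := hu (pa x) ⟨_, h1⟩
        exact congrArg Subtype.val this
      have e2 : (pa y : G.Walk r y).dropUntil x hx = Walk.cons h Walk.nil := by
        have := hu ⟨_, h2⟩ (Path.singleton h)
        exact congrArg Subtype.val this
      have hedges : (pa y : G.Walk r y).edges
          = (pa x : G.Walk r x).edges ++ [s(x, y)] := by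
        conv_lhs => rw [← hspec]
        rw [Walk.edges_append, e1, e2]
        simp
      show ((((pa y : G.Walk r y).edges.map c).count a : ℕ) : ZMod 2) = _
      rw [hedges, List.map_append, List.count_append]
      push_cast
      rfl
    · have hcons : (Walk.cons h ((pa y : G.Walk r y).reverse)).IsPath := by
        rw [Walk.cons_isPath_iff]
        exact ⟨(pa y).2.reverse, by simpa [Walk.support_reverse] using hx⟩
      have e1 : (pa x : G.Walk r x)
          = (Walk.cons h ((pa y : G.Walk r y).reverse)).reverse := by
        have := hu (pa x) ⟨_, hcons.reverse⟩
        exact congrArg Subtype.val this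
      have hedges : (pa x : G.Walk r x).edges
          = (pa y : G.Walk r y).edges ++ [s(x, y)] := by
        rw [e1, Walk.reverse_cons, Walk.edges_append, Walk.reverse_reverse]
        simp [Sym2.eq_swap]
      have ex : φ x a = φ y a + (([c s(x, y)].count a : ℕ) : ZMod 2) := by
        show ((((pa x : G.Walk r x).edges.map c).count a : ℕ) : ZMod 2) = _
        rw [hedges, List.map_append, List.count_append]
        push_cast
        rfl
      rw [ex, add_assoc, two_zero, add_zero]
  have hwalk : ∀ (x y : V) (p : G.Walk x y) (a : Fin t),
      φ y a = φ x a + (((p.edges.map c).count a : ℕ) : ZMod 2) := by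
    intro x y p
    induction p with
    | nil => simp
    | @cons u u' _ h q ih =>
      intro a
      have : (Walk.cons h q).edges.map c = [c s(u, u')] ++ q.edges.map c := by
        simp
      rw [this, List.count_append, ih a, hadj _ _ h a]
      push_cast
      ring
  have hinj : Function.Injective φ := by
    intro u v h
    by_contra hne
    obtain ⟨p, hp, col, hcol⟩ := hc u v hne
    have := hwalk u v p col
    rw [h, hcol] at this
    simp only [Nat.cast_one, left_eq_add] at this
    exact one_ne_zero this
  calc Fintype.card V ≤ Fintype.card (Fin t → ZMod 2) := Fintype.card_le_of_injective φ hinj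
  _ = 2 ^ t := by simp

lemma aux_exists_coloring {V : Type*} [Fintype V] [DecidableEq V] (G : SimpleGraph V)
    (hG : G.Connected) :
    ∃ c : Sym2 V → Fin (Fintype.card (Sym2 V)), G.IsCFCColoring c := by
  classical
  refine ⟨fun e => Fintype.equivFin (Sym2 V) e, ?_⟩
  intro u v huv
  obtain ⟨p, hp⟩ : ∃ p : G.Walk u v, p.IsPath :=
    ⟨(hG.preconnected u v).some.toPath, ((hG.preconnected u v).some.toPath).2⟩
  refine ⟨p, hp, ?_⟩
  have hlen : p.edges ≠ [] := by
    intro h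
    have h0 : p.length = 0 := by
      have := SimpleGraph.Walk.length_edges p
      rw [h] at this
      simpa using this.symm
    exact huv (SimpleGraph.Walk.eq_of_length_eq_zero h0)
  obtain ⟨e, he⟩ := List.exists_mem_of_ne_nil _ hlen
  refine ⟨Fintype.equivFin (Sym2 V) e, ?_⟩
  have hnodup : (p.edges.map (fun e => Fintype.equivFin (Sym2 V) e)).Nodup :=
    hp.isTrail.edges_nodup.map (Equiv.injective _)
  have hmem : Fintype.equivFin (Sym2 V) e ∈ p.edges.map (fun e => Fintype.equivFin (Sym2 V) e) :=
    List.mem_map.mpr ⟨e, he, rfl⟩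
  have h1 := List.count_pos_iff.mpr hmem
  have h2 := List.nodup_iff_count_le_one.mp hnodup (Fintype.equivFin (Sym2 V) e)
  omega

/-! ### Auxiliary lemmas: the cycle graph -/

open Fin.NatCast Fin.CommRing

/-- The arc walk in the cycle graph going `a, a+1, ..., a+L`. -/
def arcWalk {m : ℕ} (a : Fin (m + 3)) : (L : ℕ) → (cycleGraph (m + 3)).Walk a (a + L)
  | 0 => Walk.nil.copy rfl (by simp)
  | (L + 1) =>
      ((arcWalk a L).concat
        (show (cycleGraph (m + 3)).Adj (a + (L : Fin (m + 3))) (a + (L : Fin (m + 3)) + 1) by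
          rw [cycleGraph_adj]; right; ring)).copy rfl (by push_cast; ring)

lemma arcWalk_support {m : ℕ} (a : Fin (m + 3)) (L : ℕ) :
    (arcWalk a L).support = (List.range (L + 1)).map (fun (i : ℕ) => a + (i : Fin (m + 3))) := by
  induction L with
  | zero => simp [arcWalk, List.range_succ]
  | succ L ih =>
      have hcast : ((L + 1 : ℕ) : Fin (m + 3)) = (L : Fin (m + 3)) + 1 := by push_cast; ring
      rw [arcWalk, Walk.support_copy, Walk.support_concat, ih]
      simp [List.range_succ, hcast, add_assoc]

lemma arcWalk_edges {m : ℕ} (a : Fin (m + 3)) (L : ℕ) :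
    (arcWalk a L).edges
      = (List.range L).map
          (fun (i : ℕ) => s(a + (i : Fin (m + 3)), a + (i : Fin (m + 3)) + 1)) := by
  induction L with
  | zero => simp [arcWalk]
  | succ L ih =>
      rw [arcWalk, Walk.edges_copy, Walk.edges_concat, ih]
      simp [List.range_succ]

lemma arcWalk_isPath {m : ℕ} (a : Fin (m + 3)) {L : ℕ} (hL : L < m + 3) :
    (arcWalk a L).IsPath := by
  rw [Walk.isPath_def, arcWalk_support]
  refine List.Nodup.map_on ?_ List.nodup_range
  intro i hi j hj hij
  rw [List.mem_range] at hi hj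
  have h1 : (i : Fin (m + 3)) = (j : Fin (m + 3)) := add_left_cancel hij
  have h2 : (i : Fin (m + 3)).val = (j : Fin (m + 3)).val := by rw [h1]
  rwa [Fin.val_natCast, Fin.val_natCast, Nat.mod_eq_of_lt (by omega), Nat.mod_eq_of_lt (by omega)]
    at h2

lemma fin_sub_val {m : ℕ} (a b : Fin (m + 3)) :
    (a - b).val = if b.val ≤ a.val then a.val - b.val else a.val + (m + 3) - b.val := by
  rw [Fin.sub_def]
  show ((m + 3 - b.val) + a.val) % (m + 3) = _
  have hb := b.is_lt
  have ha := a.is_lt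
  split
  · have h1 : m + 3 - b.val + a.val = (m + 3) + (a.val - b.val) := by omega
    rw [h1, Nat.add_mod_left, Nat.mod_eq_of_lt (by omega)]
  · rw [Nat.mod_eq_of_lt (by omega)]
    omega

lemma count_map_ite_zero {α : Type*} [DecidableEq α] (e₀ : α) (l : List α) (h : e₀ ∉ l) :
    (l.map (fun e => if e = e₀ then (1 : Fin 2) else 0)).count 1 = 0 := by
  rw [List.count_eq_zero]
  intro hmem
  obtain ⟨e, hel, hee⟩ := List.mem_map.mp hmem
  by_cases hc : e = e₀
  · exact h (hc ▸ hel)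
  · simp [hc] at hee

lemma count_map_ite {α : Type*} [DecidableEq α] (e₀ : α) (l : List α) (hn : l.Nodup)
    (hm : e₀ ∈ l) :
    (l.map (fun e => if e = e₀ then (1 : Fin 2) else 0)).count 1 = 1 := by
  induction l with
  | nil => simp at hm
  | cons b t ih =>
    obtain ⟨hbt, hnt⟩ := List.nodup_cons.mp hn
    rw [List.map_cons, List.count_cons]
    by_cases hb : b = e₀
    · subst hb
      rw [count_map_ite_zero _ _ hbt]
      simp
    · have hmt : e₀ ∈ t := by
        rcases List.mem_cons.mp hm with h | h
        · exact absurd h.symm hb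
        · exact h
      rw [ih hnt hmt]
      simp [hb]

lemma exists_path_mem {m : ℕ} (u v : Fin (m + 3)) (h : v.val < u.val) :
    ∃ p : (cycleGraph (m + 3)).Walk u v, p.IsPath ∧ s((-1 : Fin (m + 3)), 0) ∈ p.edges := by
  have hend : u + (((v - u).val : ℕ) : Fin (m + 3)) = v := by
    rw [Fin.cast_val_eq_self]; ring
  refine ⟨(arcWalk u (v - u).val).copy rfl hend, ?_, ?_⟩
  · rw [Walk.isPath_copy]
    exact arcWalk_isPath u ((v - u).is_lt)
  · rw [Walk.edges_copy, arcWalk_edges]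
    have hneg : (-1 : Fin (m + 3)).val = m + 2 := by
      rw [show (-1 : Fin (m + 3)) = 0 - 1 by ring, fin_sub_val]
      simp
    have hu3 := u.is_lt
    have hv3 := v.is_lt
    have e1 : ((-1 : Fin (m + 3)) - u).val = m + 2 - u.val := by
      rw [fin_sub_val, hneg, if_pos (by omega)]
    have e2 : (v - u).val = v.val + (m + 3) - u.val := by
      rw [fin_sub_val, if_neg (by omega)]
    refine List.mem_map.mpr ⟨((-1 : Fin (m + 3)) - u).val, ?_, ?_⟩
    · rw [List.mem_range, e1, e2]
      omega
    · rw [Fin.cast_val_eq_self, show u + (-1 - u) = -1 from by ring,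
        show (-1 : Fin (m + 3)) + 1 = 0 from by ring]

lemma cycle_ncard {m : ℕ} : (cycleGraph (m + 3)).edgeSet.ncard = m + 3 := by
  classical
  have hsum := SimpleGraph.sum_degrees_eq_twice_card_edges (cycleGraph (m + 3))
  rw [Finset.sum_congr rfl fun v _ => cycleGraph_degree_three_le] at hsum
  rw [Finset.sum_const, Finset.card_univ, Fintype.card_fin, smul_eq_mul] at hsum
  rw [← SimpleGraph.coe_edgeFinset, Set.ncard_coe_finset]
  omega

lemma cycle_cfc {m : ℕ} (hm : 1 ≤ m) : (cycleGraph (m + 3)).cfc = 2 := by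
  classical
  have h2S : ∃ cc : Sym2 (Fin (m + 3)) → Fin 2, (cycleGraph (m + 3)).IsCFCColoring cc := by
    refine ⟨fun e => if e = s((-1 : Fin (m + 3)), 0) then (1 : Fin 2) else 0, ?_⟩
    intro u v huv
    rcases lt_trichotomy v.val u.val with hlt | heq | hgt
    · obtain ⟨p, hp, hmem⟩ := exists_path_mem u v hlt
      exact ⟨p, hp, 1, count_map_ite _ _ hp.isTrail.edges_nodup hmem⟩
    · exact absurd (Fin.ext heq).symm huv
    · obtain ⟨q, hq, hmem⟩ := exists_path_mem v u hgt
      refine ⟨q.reverse, hq.reverse, 1, ?_⟩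
      rw [Walk.edges_reverse]
      exact count_map_ite _ _ (List.nodup_reverse.mpr hq.isTrail.edges_nodup)
        (List.mem_reverse.mpr hmem)
  have hv2 : (2 : Fin (m + 3)).val = 2 := by
    show 2 % (m + 3) = 2
    exact Nat.mod_eq_of_lt (by omega)
  have h0 : ¬ ∃ cc : Sym2 (Fin (m + 3)) → Fin 0, (cycleGraph (m + 3)).IsCFCColoring cc := by
    rintro ⟨cc, -⟩
    exact (cc s(0, 0)).elim0
  have h1 : ¬ ∃ cc : Sym2 (Fin (m + 3)) → Fin 1, (cycleGraph (m + 3)).IsCFCColoring cc := by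
    rintro ⟨cc, hcc⟩
    have h02 : (0 : Fin (m + 3)) ≠ 2 := by
      intro h
      have := congrArg Fin.val h
      rw [hv2] at this
      simp at this
    obtain ⟨p, hp, col, hcol⟩ := hcc 0 2 h02
    have hall : ∀ b ∈ p.edges.map cc, col = b := fun b _ => Subsingleton.elim _ _
    have hlen := List.count_eq_length.mpr hall
    rw [hcol] at hlen
    have hplen : p.length = 1 := by
      have := SimpleGraph.Walk.length_edges p
      rw [List.length_map] at hlen
      omega
    cases p with
    | @cons _ w _ hadj q =>
      cases q with
      | nil =>
        rw [cycleGraph_adj'] at hadj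
        have hc1 : ((0 : Fin (m + 3)) - 2).val = m + 1 := by
          rw [fin_sub_val, if_neg (by rw [hv2]; simp)]
          rw [hv2]
          simp
        have hc2 : ((2 : Fin (m + 3)) - 0).val = 2 := by
          rw [fin_sub_val, if_pos (by simp), hv2]
          simp
        rw [hc1, hc2] at hadj
        rcases hadj with h | h <;> omega
      | cons h' q' => simp [SimpleGraph.Walk.length_cons] at hplen
  refine le_antisymm (Nat.sInf_le h2S) ?_
  by_contra hne
  push_neg at hne
  have hmem := Nat.sInf_mem (⟨2, h2S⟩ : {k | ∃ cc : Sym2 (Fin (m + 3)) → Fin k,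
    (cycleGraph (m + 3)).IsCFCColoring cc}.Nonempty)
  obtain h | h : (cycleGraph (m + 3)).cfc = 0 ∨ (cycleGraph (m + 3)).cfc = 1 := by
    have : (cycleGraph (m + 3)).cfc < 2 := hne
    omega
  · rw [SimpleGraph.cfc] at h
    rw [h] at hmem
    exact h0 hmem
  · rw [SimpleGraph.cfc] at h
    rw [h] at hmem
    exact h1 hmem

/-! ### The main theorem -/

/-- For `n ≥ 2` and `3 ≤ k < ⌈log₂ n⌉`: every connected graph of order `n` with at most
`n - 1` edges has `cfc ≥ k`, while the cycle `C_n` is a connected graph of order `n` with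
exactly `n` edges whose conflict-free connection number `2` is less than `k`.  Hence
`n - 1` is the largest integer `m` such that every connected graph of order `n` with at
most `m` edges has conflict-free connection number at least `k`. -/
theorem stmt_12 (n k : ℕ) (hn : 2 ≤ n) (hk3 : 3 ≤ k) (hk : k < Nat.clog 2 n) :
    (∀ G : SimpleGraph (Fin n), G.Connected → G.edgeSet.ncard ≤ n - 1 → k ≤ G.cfc) ∧
    ((cycleGraph n).Connected ∧ (cycleGraph n).edgeSet.ncard = n ∧
      (cycleGraph n).cfc = 2 ∧ 2 < k) := by
  classical
  have h2k : 2 ^ k < n := (Nat.lt_clog_iff_pow_lt one_lt_two).mp hk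
  have h8 : 8 < n := by
    have h1 : 2 ^ 3 ≤ 2 ^ k := Nat.pow_le_pow_right (by omega) hk3
    omega
  constructor
  · intro G hconn hsize
    have hacyc : G.IsAcyclic := aux_acyclic G hconn (by simpa [Fintype.card_fin] using hsize)
    have hSne : {m | ∃ c : Sym2 (Fin n) → Fin m, G.IsCFCColoring c}.Nonempty :=
      ⟨_, aux_exists_coloring G hconn⟩
    obtain ⟨c, hc⟩ : ∃ c : Sym2 (Fin n) → Fin (G.cfc), G.IsCFCColoring c :=
      Nat.sInf_mem hSne
    have hcard := aux_card_le_pow G hconn hacyc c hc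
    rw [Fintype.card_fin] at hcard
    have hlt : 2 ^ k < 2 ^ G.cfc := lt_of_lt_of_le h2k hcard
    have := (Nat.pow_lt_pow_iff_right (by omega : 1 < 2)).mp hlt
    omega
  · obtain ⟨m, rfl⟩ : ∃ m, n = m + 3 := ⟨n - 3, by omega⟩
    exact ⟨cycleGraph_connected, cycle_ncard, cycle_cfc (by omega), by omega⟩
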